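/- Let G be an n_p × n_e real matrix with entries in {0,1}, let B = GᵀG, and suppose the columns are ordered so that the diagonal entries satisfy B₁₁ ≥ B₂₂ ≥ ... ≥ B_{n_e,n_e}. Assume that for every row i of G, the number of 1 entries in that row is at most d (interpreted as the diameter bound: every path has length at most d). Then for every k, the k-th largest eigenvalue λ_k of B satisfies λ_k ≤ B_{kk} · d. -/
import Mathlib


open Matrix Finset

/-- Proposition 1, first part: λ_k ≤ B_{kk} · d. -/
theorem stmt0 (np ne d : ℕ) (G : Matrix (Fin np) (Fin ne) ℝ)
    (hG : ∀ i j, G i j = 0 ∨ G i j = 1)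
    (hrow : ∀ i, (Finset.univ.filter fun j => G i j = 1).card ≤ d)
    (B : Matrix (Fin ne) (Fin ne) ℝ) (hB : B = Gᵀ * G)
    (hdiag : ∀ k l : Fin ne, k ≤ l → B l l ≤ B k k)
    (ev : Fin ne → ℝ) (u : Fin ne → Fin ne → ℝ)
    (huorth : ∀ i j, (∑ t, u i t * u j t) = if i = j then (1:ℝ) else 0)
    (heig : ∀ i, B.mulVec (u i) = ev i • u i)
    (hev : Antitone ev) :
    ∀ k : Fin ne, ev k ≤ B k k * d := by
  intro k
  set K : ℕ := (k : ℕ) with hKdef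
  have hK1 : K + 1 ≤ ne := k.isLt
  have hKle : K ≤ ne := Nat.le_of_lt k.isLt
  -- a nonzero coefficient vector whose combination vanishes on the first K coordinates
  set M : Matrix (Fin K) (Fin (K + 1)) ℝ :=
    fun j i => u (Fin.castLE hK1 i) (Fin.castLE hKle j) with hMdef
  have hnotinj : ¬ Function.Injective M.mulVecLin := by
    intro h
    have h2 := LinearMap.finrank_le_finrank_of_injective h
    simp [Module.finrank_pi] at h2
  obtain ⟨a, b, hab, hne⟩ := Function.not_injective_iff.mp hnotinj
  set c : Fin (K + 1) → ℝ := a - b with hcdef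
  have hc0 : c ≠ 0 := sub_ne_zero_of_ne hne
  have hMc : M.mulVec c = 0 := by
    rw [hcdef, Matrix.mulVec_sub, sub_eq_zero]
    simpa [Matrix.mulVecLin_apply] using hab
  -- the test vector
  set x : Fin ne → ℝ := fun j => ∑ i : Fin (K + 1), c i * u (Fin.castLE hK1 i) j with hxdef
  have hx0 : ∀ j : Fin ne, (j : ℕ) < K → x j = 0 := by
    intro j hj
    have := congrFun hMc ⟨(j : ℕ), hj⟩
    simp only [Matrix.mulVec, dotProduct, hMdef, Pi.zero_apply] at this
    have hcast : Fin.castLE hKle (⟨(j : ℕ), hj⟩ : Fin K) = j := by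
      ext; simp
    rw [hcast] at this
    simpa [hxdef, mul_comm] using this
  -- key orthogonality computation
  have key : ∀ f g : Fin (K + 1) → ℝ,
      (∑ j, (∑ i, f i * u (Fin.castLE hK1 i) j) * (∑ i, g i * u (Fin.castLE hK1 i) j))
      = ∑ i, f i * g i := by
    intro f g
    have step1 : ∀ j, (∑ i, f i * u (Fin.castLE hK1 i) j) * (∑ i, g i * u (Fin.castLE hK1 i) j)
        = ∑ i, ∑ i', f i * g i' * (u (Fin.castLE hK1 i) j * u (Fin.castLE hK1 i') j) := by
      intro j
      rw [Finset.sum_mul_sum]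
      exact Finset.sum_congr rfl fun i _ => Finset.sum_congr rfl fun i' _ => by ring
    simp only [step1]
    rw [Finset.sum_comm]
    have step2 : ∀ i : Fin (K + 1),
        (∑ j, ∑ i', f i * g i' * (u (Fin.castLE hK1 i) j * u (Fin.castLE hK1 i') j))
        = ∑ i', f i * g i' * (if Fin.castLE hK1 i = Fin.castLE hK1 i' then (1:ℝ) else 0) := by
      intro i
      rw [Finset.sum_comm]
      refine Finset.sum_congr rfl fun i' _ => ?_
      rw [← huorth, Finset.mul_sum]
    simp only [step2, Fin.castLE_inj]
    simp
  set S : ℝ := ∑ i, c i * c i with hSdef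
  have hS : ∑ j, x j * x j = S := by
    simpa [hxdef, hSdef] using key c c
  have hSpos : 0 < S := by
    obtain ⟨i0, hi0⟩ := Function.ne_iff.mp hc0
    have hi0' : c i0 ≠ 0 := by simpa using hi0
    exact Finset.sum_pos' (fun i _ => mul_self_nonneg _)
      ⟨i0, Finset.mem_univ _, mul_self_pos.mpr hi0'⟩
  -- B x pointwise
  have hBx : ∀ j, B.mulVec x j
      = ∑ i : Fin (K + 1), c i * (ev (Fin.castLE hK1 i) * u (Fin.castLE hK1 i) j) := by
    intro j
    simp only [Matrix.mulVec, dotProduct, hxdef, Finset.mul_sum]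
    rw [Finset.sum_comm]
    apply Finset.sum_congr rfl
    intro i _
    have := congrFun (heig (Fin.castLE hK1 i)) j
    simp only [Matrix.mulVec, dotProduct, Pi.smul_apply, smul_eq_mul] at this
    calc ∑ t, B j t * (c i * u (Fin.castLE hK1 i) t)
        = c i * ∑ t, B j t * u (Fin.castLE hK1 i) t := by
          rw [Finset.mul_sum]; apply Finset.sum_congr rfl; intro t _; ring
      _ = c i * (ev (Fin.castLE hK1 i) * u (Fin.castLE hK1 i) j) := by rw [this]
  -- the quadratic form
  set Q : ℝ := ∑ j, x j * B.mulVec x j with hQdef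
  have hQeq : Q = ∑ i : Fin (K + 1), ev (Fin.castLE hK1 i) * (c i * c i) := by
    have h1 : ∀ j, B.mulVec x j
        = ∑ i, (c i * ev (Fin.castLE hK1 i)) * u (Fin.castLE hK1 i) j := by
      intro j; rw [hBx j]; exact Finset.sum_congr rfl fun i _ => by ring
    calc Q = ∑ j, (∑ i, c i * u (Fin.castLE hK1 i) j)
              * (∑ i, (c i * ev (Fin.castLE hK1 i)) * u (Fin.castLE hK1 i) j) := by
          rw [hQdef]
          exact Finset.sum_congr rfl fun j _ => by rw [h1 j]
      _ = ∑ i, c i * (c i * ev (Fin.castLE hK1 i)) := key _ _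
      _ = ∑ i, ev (Fin.castLE hK1 i) * (c i * c i) :=
          Finset.sum_congr rfl fun i _ => by ring
  -- lower bound on Q
  have hQlow : ev k * S ≤ Q := by
    rw [hQeq, hSdef, Finset.mul_sum]
    apply Finset.sum_le_sum
    intro i _
    have hle : Fin.castLE hK1 i ≤ k := by
      have : (i : ℕ) ≤ K := Nat.lt_succ_iff.mp i.isLt
      exact this
    exact mul_le_mul_of_nonneg_right (hev hle) (mul_self_nonneg _)
  -- upper bound on Q
  have hGsq : ∀ p j, G p j * G p j = G p j := by
    intro p j; rcases hG p j with h | h <;> rw [h] <;> ring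
  have hQcol : Q = ∑ p, (∑ j, G p j * x j) ^ 2 := by
    calc Q = x ⬝ᵥ ((Gᵀ * G) *ᵥ x) := by rw [hQdef, hB]; rfl
      _ = x ⬝ᵥ (Gᵀ *ᵥ (G *ᵥ x)) := by rw [Matrix.mulVec_mulVec]
      _ = (x ᵥ* Gᵀ) ⬝ᵥ (G *ᵥ x) := Matrix.dotProduct_mulVec _ _ _
      _ = (G *ᵥ x) ⬝ᵥ (G *ᵥ x) := by rw [Matrix.vecMul_transpose]
      _ = ∑ p, (∑ j, G p j * x j) ^ 2 := by
          simp only [dotProduct, Matrix.mulVec, sq]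
  have hrowbound : ∀ p, (∑ j, G p j * x j) ^ 2 ≤ (d : ℝ) * ∑ j, G p j * (x j * x j) := by
    intro p
    set s := Finset.univ.filter fun j => G p j = 1 with hsdef
    have hsum1 : ∑ j, G p j * x j = ∑ j ∈ s, x j := by
      rw [hsdef, Finset.sum_filter]
      apply Finset.sum_congr rfl
      intro j _
      rcases hG p j with h | h <;> simp [h]
    have hsum2 : ∑ j ∈ s, x j ^ 2 = ∑ j, G p j * (x j * x j) := by
      rw [hsdef, Finset.sum_filter]
      apply Finset.sum_congr rfl
      intro j _
      rcases hG p j with h | h <;> simp [h, sq]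
    calc (∑ j, G p j * x j) ^ 2 = (∑ j ∈ s, x j) ^ 2 := by rw [hsum1]
      _ ≤ (s.card : ℝ) * ∑ j ∈ s, x j ^ 2 := sq_sum_le_card_mul_sum_sq
      _ ≤ (d : ℝ) * ∑ j ∈ s, x j ^ 2 := by
          apply mul_le_mul_of_nonneg_right
          · exact_mod_cast hrow p
          · positivity
      _ = (d : ℝ) * ∑ j, G p j * (x j * x j) := by rw [hsum2]
  have hBdiag : ∀ j : Fin ne, B j j = ∑ p, G p j := by
    intro j
    rw [hB]
    simp only [Matrix.mul_apply, Matrix.transpose_apply]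
    exact Finset.sum_congr rfl fun p _ => hGsq p j
  have hQup : Q ≤ B k k * d * S := by
    calc Q = ∑ p, (∑ j, G p j * x j) ^ 2 := hQcol
      _ ≤ ∑ p, (d : ℝ) * ∑ j, G p j * (x j * x j) :=
          Finset.sum_le_sum fun p _ => hrowbound p
      _ = (d : ℝ) * ∑ j, B j j * (x j * x j) := by
          rw [← Finset.mul_sum, Finset.sum_comm]
          congr 1
          refine Finset.sum_congr rfl fun j _ => ?_
          rw [hBdiag j]
          exact (Finset.sum_mul _ _ _).symm
      _ ≤ (d : ℝ) * ∑ j, B k k * (x j * x j) := by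
          apply mul_le_mul_of_nonneg_left _ (Nat.cast_nonneg d)
          apply Finset.sum_le_sum
          intro j _
          by_cases hj : (j : ℕ) < K
          · rw [hx0 j hj]; simp
          · have hkj : k ≤ j := not_lt.mp hj
            exact mul_le_mul_of_nonneg_right (hdiag k j hkj) (mul_self_nonneg _)
      _ = B k k * d * S := by rw [← Finset.mul_sum, hS]; ring
  have h3 : ev k * S ≤ (B k k * d) * S := le_trans hQlow hQup
  exact le_of_mul_le_mul_right h3 hSpos
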